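/- Let N > 1 be odd with gcd(2α, N) = 1 and let c satisfy c^{2α} ≡ (1+N)^{2α·m} (mod N²) with 0 ≤ m < N. Then ((c^{2α} mod N²) − 1)/N · ((2α)⁻¹ mod N) ≡ m (mod N). -/
import Mathlib

lemma one_add_pow_modeq (x : ℤ) (k : ℕ) : (1 + x) ^ k ≡ 1 + k * x [ZMOD x ^ 2] := by
  induction k with
  | zero => simp
  | succ k ih =>
    have hx2 : (x : ℤ) ^ 2 ≡ 0 [ZMOD x ^ 2] := Int.modEq_zero_iff_dvd.mpr dvd_rfl
    calc (1 + x) ^ (k + 1) = (1 + x) ^ k * (1 + x) := pow_succ _ _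
      _ ≡ (1 + k * x) * (1 + x) [ZMOD x ^ 2] := ih.mul_right _
      _ = 1 + (k + 1 : ℕ) * x + k * x ^ 2 := by push_cast; ring
      _ ≡ 1 + (k + 1 : ℕ) * x + k * 0 [ZMOD x ^ 2] :=
          (Int.ModEq.refl _).add ((Int.ModEq.refl (k : ℤ)).mul hx2)
      _ = 1 + (k + 1 : ℕ) * x := by ring

/-- Correctness of basic FastPai decryption:
`Dec(sk, c) = L(c^{2α} mod N²)·((2α)⁻¹ mod N) mod N = m`, where `L(u) = (u−1)/N`. -/
theorem fastPai_Dec_correct (N α m b : ℕ) (c : ℤ)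
    (hN : 1 < N) (hNodd : Odd N) (hα : 0 < α) (hgcd : Nat.gcd (2 * α) N = 1)
    (hm : m < N)
    (hc : c ^ (2 * α) ≡ (1 + (N : ℤ)) ^ (2 * α * m) [ZMOD (N : ℤ) ^ 2])
    (hbN : b < N) (hb : (2 * α * b) % N = 1 % N) :
    ((c ^ (2 * α) % (N : ℤ) ^ 2 - 1) / (N : ℤ) * (b : ℤ)) % (N : ℤ) = (m : ℤ) := by
  have hN0 : (0 : ℤ) < (N : ℤ) := by exact_mod_cast Nat.lt_of_lt_of_le Nat.zero_lt_one hN.le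
  set r : ℤ := c ^ (2 * α) % (N : ℤ) ^ 2 with hr_def
  have hr1 : r ≡ c ^ (2 * α) [ZMOD (N : ℤ) ^ 2] := Int.emod_emod_of_dvd _ dvd_rfl
  have hr : r ≡ 1 + (2 * α * m : ℕ) * N [ZMOD (N : ℤ) ^ 2] :=
    (hr1.trans hc).trans (one_add_pow_modeq (N : ℤ) (2 * α * m))
  obtain ⟨q, hq⟩ := Int.modEq_iff_dvd.mp hr.symm
  have hqr : r - 1 = ((2 * α * m : ℕ) : ℤ) * N + (N : ℤ) ^ 2 * q := by linarith [hq]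
  have ht : (r - 1) / (N : ℤ) = ((2 * α * m : ℕ) : ℤ) + (N : ℤ) * q := by
    rw [hqr]
    have h2 : ((2 * α * m : ℕ) : ℤ) * N + (N : ℤ) ^ 2 * q
        = (((2 * α * m : ℕ) : ℤ) + (N : ℤ) * q) * N := by ring
    rw [h2, Int.mul_ediv_cancel _ (ne_of_gt hN0)]
  have hbb : ((2 * α * b : ℕ) : ℤ) ≡ 1 [ZMOD (N : ℤ)] := by
    have h := congrArg (Nat.cast : ℕ → ℤ) hb
    push_cast at h
    simpa [Int.ModEq] using h
  have hmod : (r - 1) / (N : ℤ) * (b : ℤ) ≡ (m : ℤ) [ZMOD (N : ℤ)] := by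
    rw [ht]
    have hNz : (N : ℤ) ≡ 0 [ZMOD (N : ℤ)] := Int.modEq_zero_iff_dvd.mpr dvd_rfl
    calc (((2 * α * m : ℕ) : ℤ) + (N : ℤ) * q) * (b : ℤ)
        = (m : ℤ) * ((2 * α * b : ℕ) : ℤ) + (N : ℤ) * (q * b) := by push_cast; ring
      _ ≡ (m : ℤ) * 1 + 0 * (q * b) [ZMOD (N : ℤ)] :=
          (hbb.mul_left _).add (hNz.mul_right _)
      _ = (m : ℤ) := by ring
  calc (r - 1) / (N : ℤ) * (b : ℤ) % (N : ℤ) = (m : ℤ) % (N : ℤ) := hmod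
    _ = (m : ℤ) := Int.emod_eq_of_lt (by positivity) (by exact_mod_cast hm)
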